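/- Let G be a one-sided POSG and let V be a piecewise linear and convex function on Δ(S), i.e. V(b) = max_{α ∈ Γ₀} α(b) for a finite nonempty set Γ₀ of linear functions on Δ(S). Define HV using Γ = Conv(Γ₀) by [HV](b) = sup_{π1 ∈ Π1} sup_{ᾱ ∈ Γ^{A1×O}} valcomp(π1, ᾱ)(b). Then HV is piecewise linear and convex: there exists a finite nonempty set Γ' of linear functions on Δ(S) such that [HV](b) = max_{α ∈ Γ'} α(b) for every b ∈ Δ(S). -/

import Mathlib

open scoped BigOperators

noncomputable section

/-- ℓ1 distance on `S → ℝ`. -/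
def l1dist {S : Type*} [Fintype S] (p q : S → ℝ) : ℝ := ∑ s, |p s - q s|

/-- Evaluation at a belief `b` of the linear function on the simplex with vertex values
`α : S → ℝ`. -/
def lineval {S : Type*} [Fintype S] (α : S → ℝ) (b : S → ℝ) : ℝ := ∑ s, b s * α s

/-- `f` is `k`-Lipschitz with respect to the ℓ1 metric on the probability simplex. -/
def LipOnSimplex {S : Type*} [Fintype S] (k : ℝ) (f : (S → ℝ) → ℝ) : Prop :=
  ∀ p ∈ stdSimplex ℝ S, ∀ q ∈ stdSimplex ℝ S, |f p - f q| ≤ k * l1dist p q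

namespace PolyAux

variable {n ι : Type*} [Fintype n] [Fintype ι]

lemma extremePoints_finite (L : ι → ((n → ℝ) →ₗ[ℝ] ℝ)) (c : ι → ℝ) :
    (Set.extremePoints ℝ {x : n → ℝ | ∀ i, L i x ≤ c i}).Finite := by
  classical
  set K := {x : n → ℝ | ∀ i, L i x ≤ c i} with hK
  have hinj : Set.InjOn (fun x => Finset.univ.filter (fun i => L i x = c i))
      (Set.extremePoints ℝ K) := by
    intro x hx y hy hxy
    by_contra hne
    have hmemx : x ∈ K := hx.1
    have hmemy : y ∈ K := hy.1
    have hact : ∀ i, L i x = c i ↔ L i y = c i := by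
      intro i
      have h := Finset.ext_iff.1 hxy i
      simpa using h
    set d := x - y with hd
    have hd0 : ∀ i, L i x = c i → L i d = 0 := by
      intro i hi
      have h2 : L i y = c i := (hact i).1 hi
      simp [hd, map_sub, hi, h2]
    have hstrict : ∀ i, 0 < L i d → L i x < c i := by
      intro i hpos
      rcases lt_or_eq_of_le (hmemx i) with h | h
      · exact h
      · exact absurd (hd0 i h) (by linarith)
    obtain ⟨t, ht0, ht⟩ : ∃ t : ℝ, 0 < t ∧ ∀ i, L i x + t * L i d ≤ c i := by
      by_cases hF : (Finset.univ.filter (fun j => 0 < L j d)).Nonempty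
      · set tv := (Finset.univ.filter (fun j => 0 < L j d)).inf' hF
          (fun j => (c j - L j x) / L j d) with htv
        have htv0 : 0 < tv := by
          rw [htv, Finset.lt_inf'_iff]
          intro j hj
          have hpos := (Finset.mem_filter.1 hj).2
          exact div_pos (sub_pos.2 (hstrict j hpos)) hpos
        refine ⟨tv, htv0, fun i => ?_⟩
        by_cases hip : 0 < L i d
        · have hmem : i ∈ Finset.univ.filter (fun j => 0 < L j d) :=
            Finset.mem_filter.2 ⟨Finset.mem_univ i, hip⟩
          have hle : tv ≤ (c i - L i x) / L i d :=
            Finset.inf'_le (fun j => (c j - L j x) / L j d) hmem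
          have h2 := (le_div_iff₀ hip).1 hle
          linarith
        · push_neg at hip
          have h2 : tv * L i d ≤ 0 := mul_nonpos_of_nonneg_of_nonpos htv0.le hip
          have := hmemx i
          linarith
      · refine ⟨1, one_pos, fun i => ?_⟩
        have h3 : ¬ 0 < L i d := fun h =>
          hF ⟨i, Finset.mem_filter.2 ⟨Finset.mem_univ i, h⟩⟩
        push_neg at h3
        have := hmemx i
        linarith
    have hw : x + t • d ∈ K := by
      intro i
      have := ht i
      simpa [map_add, map_smul, smul_eq_mul] using this
    have h1t : (0:ℝ) < 1 + t := by linarith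
    have hseg : x ∈ openSegment ℝ (x + t • d) y := by
      refine ⟨1/(1+t), t/(1+t), by positivity, by positivity, by field_simp, ?_⟩
      rw [hd]
      match_scalars <;> field_simp <;> ring
    have hyx := hx.2 hmemy hw (by rw [openSegment_symm]; exact hseg)
    exact hne hyx.symm
  exact Set.Finite.of_finite_image (Set.toFinite _) hinj

lemma poly_argmax (L : ι → ((n → ℝ) →ₗ[ℝ] ℝ)) (c : ι → ℝ)
    (hcomp : IsCompact {x : n → ℝ | ∀ i, L i x ≤ c i}) :
    ∃ W : Set (n → ℝ), W.Finite ∧ W ⊆ {x : n → ℝ | ∀ i, L i x ≤ c i} ∧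
      ∀ g : (n → ℝ) →ₗ[ℝ] ℝ, ∀ x ∈ {x : n → ℝ | ∀ i, L i x ≤ c i},
        ∃ v ∈ W, g x ≤ g v := by
  classical
  set K := {x : n → ℝ | ∀ i, L i x ≤ c i} with hK
  refine ⟨Set.extremePoints ℝ K, extremePoints_finite L c, extremePoints_subset, ?_⟩
  have hconv : Convex ℝ K := by
    have h : K = ⋂ i, {x : n → ℝ | L i x ≤ c i} := by
      ext x; simp [hK, Set.mem_iInter]
    rw [h]
    exact convex_iInter fun i => convex_halfSpace_le (L i).isLinear (c i)
  have hKM := closure_convexHull_extremePoints hcomp hconv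
  have hfin := extremePoints_finite L c
  have hclosed : IsClosed (convexHull ℝ (Set.extremePoints ℝ K)) :=
    (hfin.isCompact_convexHull ℝ).isClosed
  have hKrepr : K = convexHull ℝ (Set.extremePoints ℝ K) := by
    conv_lhs => rw [← hKM]
    rw [hclosed.closure_eq]
  intro g x hx
  have hxc : x ∈ convexHull ℝ (Set.extremePoints ℝ K) := hKrepr ▸ hx
  have hgc : ConvexOn ℝ (convexHull ℝ (Set.extremePoints ℝ K)) g := by
    refine ⟨convex_convexHull ℝ _, fun p _ q _ a b _ _ _ => le_of_eq ?_⟩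
    simp [map_add, map_smul, smul_eq_mul]
  exact hgc.exists_ge_of_mem_convexHull (subset_convexHull ℝ _) hxc

end PolyAux

/-- A one-sided partially observable stochastic game. -/
structure OSPOSG (S A1 A2 O : Type*) [Fintype S] [Fintype A1] [Fintype A2] [Fintype O] where
  /-- transition function: `T s a1 a2 o s'` is the probability of observing `o` and moving
  to `s'` from `s` under actions `a1, a2`. -/
  T : S → A1 → A2 → O → S → ℝ
  T_nonneg : ∀ s a1 a2 o s', 0 ≤ T s a1 a2 o s'
  T_sum : ∀ s a1 a2, ∑ o, ∑ s', T s a1 a2 o s' = 1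
  /-- reward function of player 1 -/
  R : S → A1 → A2 → ℝ
  /-- discount factor -/
  γ : ℝ
  γ_pos : 0 < γ
  γ_lt_one : γ < 1

namespace OSPOSG

variable {S A1 A2 O : Type*} [Fintype S] [Fintype A1] [Fintype A2] [Fintype O]
  [Nonempty S] [Nonempty A1] [Nonempty A2] [Nonempty O]

/-- The minimum reward `r_min`. -/
def rmin (G : OSPOSG S A1 A2 O) : ℝ :=
  Finset.univ.inf' Finset.univ_nonempty fun x : S × A1 × A2 => G.R x.1 x.2.1 x.2.2

/-- The maximum reward `r_max`. -/
def rmax (G : OSPOSG S A1 A2 O) : ℝ :=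
  Finset.univ.sup' Finset.univ_nonempty fun x : S × A1 × A2 => G.R x.1 x.2.1 x.2.2

/-- `L = r_min / (1 - γ)`. -/
def Lval (G : OSPOSG S A1 A2 O) : ℝ := G.rmin / (1 - G.γ)

/-- `U = r_max / (1 - γ)`. -/
def Uval (G : OSPOSG S A1 A2 O) : ℝ := G.rmax / (1 - G.γ)

/-- `δ = (U - L) / 2`. -/
def δval (G : OSPOSG S A1 A2 O) : ℝ := (G.Uval - G.Lval) / 2

/-- The set of stage strategies of player 2. -/
def Pi2 (S A2 : Type*) [Fintype A2] : Set (S → A2 → ℝ) :=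
  {π2 | ∀ s, π2 s ∈ stdSimplex ℝ A2}

/-- Vertex values of the value composition `valcomp(π1, ᾱ)`. -/
def valcompVert (G : OSPOSG S A1 A2 O) (π1 : A1 → ℝ) (αb : A1 → O → S → ℝ) (s : S) : ℝ :=
  Finset.univ.inf' Finset.univ_nonempty fun a2 =>
    ∑ a1, π1 a1 * (G.R s a1 a2 + G.γ * ∑ o, ∑ s', G.T s a1 a2 o s' * αb a1 o s')

/-- The value composition `valcomp(π1, ᾱ)`, a linear function of the belief `b`. -/
def valcomp (G : OSPOSG S A1 A2 O) (π1 : A1 → ℝ) (αb : A1 → O → S → ℝ) (b : S → ℝ) : ℝ :=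
  ∑ s, b s * G.valcompVert π1 αb s

/-- `Pr_{b,π1,π2}[a1, o]`: the probability that player 1 plays `a1` and observes `o`. -/
def Pr (G : OSPOSG S A1 A2 O) (b : S → ℝ) (π1 : A1 → ℝ) (π2 : S → A2 → ℝ)
    (a1 : A1) (o : O) : ℝ :=
  ∑ s, ∑ a2, ∑ s', b s * π1 a1 * π2 s a2 * G.T s a1 a2 o s'

/-- The updated belief `τ(b, a1, π2, o)` of player 1 (junk value `0` if the normalizing
constant vanishes; such terms are always multiplied by a zero probability below). -/
def beliefUpd (G : OSPOSG S A1 A2 O) (b : S → ℝ) (a1 : A1) (π2 : S → A2 → ℝ) (o : O) :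
    S → ℝ := fun s' =>
  (∑ s, ∑ a2, b s * π2 s a2 * G.T s a1 a2 o s') /
    (∑ s'', ∑ s, ∑ a2, b s * π2 s a2 * G.T s a1 a2 o s'')

/-- The stage utility `u^{V,b}(π1, π2)`. -/
def stageU (G : OSPOSG S A1 A2 O) (V : (S → ℝ) → ℝ) (b : S → ℝ)
    (π1 : A1 → ℝ) (π2 : S → A2 → ℝ) : ℝ :=
  (∑ s, ∑ a1, ∑ a2, b s * π1 a1 * π2 s a2 * G.R s a1 a2) +
    G.γ * ∑ a1, ∑ o, G.Pr b π1 π2 a1 o * V (G.beliefUpd b a1 π2 o)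

/-- The minimax (Bellman) operator `[HV](b) = sup_{π1} inf_{π2} u^{V,b}(π1,π2)`. -/
def Hop (G : OSPOSG S A1 A2 O) (V : (S → ℝ) → ℝ) (b : S → ℝ) : ℝ :=
  ⨆ π1 : stdSimplex ℝ A1, ⨅ π2 : Pi2 S A2, G.stageU V b π1.1 π2.1

end OSPOSG

namespace OSPOSG

variable {S A1 A2 O : Type*} [Fintype S] [Fintype A1] [Fintype A2] [Fintype O]
  [Nonempty S] [Nonempty A1] [Nonempty A2] [Nonempty O]

section PWLCAuxSection

variable [DecidableEq O]

def pwlcC (G : OSPOSG S A1 A2 O) {ι : Type*} [Fintype ι] (g : ι → S → ℝ)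
    (s : S) (a2 : A2) (e : A1 × (O → ι)) : ℝ :=
  G.R s e.1 a2 + G.γ * ∑ o, ∑ s', G.T s e.1 a2 o s' * g (e.2 o) s'

def pwlcL (G : OSPOSG S A1 A2 O) {ι : Type*} [Fintype ι] (g : ι → S → ℝ)
    (s : S) (a2 : A2) : ((A1 × (O → ι)) → ℝ) →ₗ[ℝ] ℝ where
  toFun x := ∑ e, x e * pwlcC G g s a2 e
  map_add' x y := by
    simp only [Pi.add_apply, add_mul, Finset.sum_add_distrib]
  map_smul' r x := by
    simp only [Pi.smul_apply, smul_eq_mul, RingHom.id_apply, Finset.mul_sum, mul_assoc]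

lemma pwlc_moment_eq (G : OSPOSG S A1 A2 O) {ι : Type*} [Fintype ι] (g : ι → S → ℝ)
    (π1 : A1 → ℝ) (αb : A1 → O → S → ℝ) (x : (A1 × (O → ι)) → ℝ)
    (h0 : ∀ a1, ∑ φ : O → ι, x (a1, φ) = π1 a1)
    (h1 : ∀ a1 o s', ∑ φ : O → ι, x (a1, φ) * g (φ o) s' = π1 a1 * αb a1 o s')
    (s : S) (a2 : A2) :
    ∑ a1, π1 a1 * (G.R s a1 a2 + G.γ * ∑ o, ∑ s', G.T s a1 a2 o s' * αb a1 o s')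
      = pwlcL G g s a2 x := by
  have hL : (pwlcL G g s a2) x = ∑ a1, ∑ φ : O → ι, x (a1, φ) * pwlcC G g s a2 (a1, φ) := by
    show ∑ e : A1 × (O → ι), x e * pwlcC G g s a2 e = _
    rw [Fintype.sum_prod_type]
  rw [hL]
  refine Finset.sum_congr rfl fun a1 _ => ?_
  have hx : ∑ φ : O → ι, x (a1, φ) * pwlcC G g s a2 (a1, φ)
      = π1 a1 * G.R s a1 a2
        + G.γ * ∑ o, ∑ s', G.T s a1 a2 o s' * (π1 a1 * αb a1 o s') := by
    have expand : ∀ φ : O → ι, x (a1, φ) * pwlcC G g s a2 (a1, φ)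
        = x (a1, φ) * G.R s a1 a2
          + G.γ * ∑ o, ∑ s', G.T s a1 a2 o s' * (x (a1, φ) * g (φ o) s') := by
      intro φ
      simp only [pwlcC]
      rw [mul_add]
      congr 1
      rw [mul_left_comm]
      congr 1
      rw [Finset.mul_sum]
      refine Finset.sum_congr rfl fun o _ => ?_
      rw [Finset.mul_sum]
      refine Finset.sum_congr rfl fun s' _ => ?_
      ring
    rw [Finset.sum_congr rfl fun φ _ => expand φ, Finset.sum_add_distrib]
    congr 1
    · rw [← Finset.sum_mul, h0]
    · rw [← Finset.mul_sum]
      congr 1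
      rw [Finset.sum_comm]
      refine Finset.sum_congr rfl fun o _ => ?_
      rw [Finset.sum_comm]
      refine Finset.sum_congr rfl fun s' _ => ?_
      rw [← Finset.mul_sum, h1]
  rw [hx]
  rw [mul_add]
  congr 1
  rw [mul_left_comm]
  congr 1
  rw [Finset.mul_sum]
  refine Finset.sum_congr rfl fun o _ => ?_
  rw [Finset.mul_sum]
  refine Finset.sum_congr rfl fun s' _ => ?_
  ring


lemma pwlc_exists_rep (t : Finset (S → ℝ))
    (π1 : A1 → ℝ) (hπ1 : π1 ∈ stdSimplex ℝ A1)
    (αb : A1 → O → S → ℝ)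
    (hαb : ∀ a1 o, αb a1 o ∈ convexHull ℝ (↑t : Set (S → ℝ))) :
    ∃ x : (A1 × (O → {α // α ∈ t})) → ℝ, x ∈ stdSimplex ℝ (A1 × (O → {α // α ∈ t})) ∧
      (∀ a1, ∑ φ : O → {α // α ∈ t}, x (a1, φ) = π1 a1) ∧
      (∀ a1 o s', ∑ φ : O → {α // α ∈ t}, x (a1, φ) * (↑(φ o) : S → ℝ) s'
        = π1 a1 * αb a1 o s') := by
  classical
  have hαb' := hαb
  simp only [Finset.convexHull_eq, Set.mem_setOf_eq] at hαb'
  choose w hw0 hw1 hwc using hαb'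
  refine ⟨fun e => π1 e.1 * ∏ o, w e.1 o ↑(e.2 o), ?_, ?_, ?_⟩
  · constructor
    · intro e
      exact mul_nonneg (hπ1.1 e.1) (Finset.prod_nonneg fun o _ => hw0 e.1 o _ (e.2 o).2)
    · rw [Fintype.sum_prod_type]
      have h1 : ∀ a1, ∑ φ : O → {α // α ∈ t}, π1 a1 * ∏ o, w a1 o ↑(φ o) = π1 a1 := by
        intro a1
        rw [← Finset.mul_sum, ← Fintype.prod_sum (fun o (i : {α // α ∈ t}) => w a1 o ↑i)]
        rw [Finset.prod_eq_one fun o _ => ?_, mul_one]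
        rw [Finset.sum_coe_sort]
        exact hw1 a1 o
      rw [Finset.sum_congr rfl fun a1 _ => h1 a1]
      exact hπ1.2
  · intro a1
    show ∑ φ : O → {α // α ∈ t}, π1 a1 * ∏ o, w a1 o ↑(φ o) = π1 a1
    rw [← Finset.mul_sum, ← Fintype.prod_sum (fun o (i : {α // α ∈ t}) => w a1 o ↑i)]
    rw [Finset.prod_eq_one fun o _ => ?_, mul_one]
    rw [Finset.sum_coe_sort]
    exact hw1 a1 o
  · intro a1 o0 s'
    show ∑ φ : O → {α // α ∈ t}, (π1 a1 * ∏ o, w a1 o ↑(φ o)) * (↑(φ o0) : S → ℝ) s'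
      = π1 a1 * αb a1 o0 s'
    have hαval : αb a1 o0 s' = ∑ i : {α // α ∈ t}, w a1 o0 ↑i * (↑i : S → ℝ) s' := by
      have h := hwc a1 o0
      rw [Finset.centerMass_eq_of_sum_1 _ id (hw1 a1 o0)] at h
      have h2 := congrFun h.symm s'
      rw [h2, Finset.sum_apply]
      simp only [Pi.smul_apply, smul_eq_mul, id_eq]
      exact (Finset.sum_coe_sort t (fun y => w a1 o0 y * y s')).symm
    set F : O → {α // α ∈ t} → ℝ :=
      fun o i => w a1 o ↑i * (if o = o0 then (↑i : S → ℝ) s' else 1) with hF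
    have hsplit : ∀ φ : O → {α // α ∈ t},
        (π1 a1 * ∏ o, w a1 o ↑(φ o)) * (↑(φ o0) : S → ℝ) s'
          = π1 a1 * ∏ o, F o (φ o) := by
      intro φ
      rw [hF]
      rw [Finset.prod_mul_distrib]
      rw [Finset.prod_ite_eq' Finset.univ o0 (fun o => (↑(φ o) : S → ℝ) s')]
      simp only [Finset.mem_univ, if_true]
      ring
    rw [Finset.sum_congr rfl fun φ _ => hsplit φ, ← Finset.mul_sum]
    rw [← Fintype.prod_sum F]
    congr 1
    rw [Finset.prod_eq_single o0 ?_ ?_]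
    · rw [hαval]
      refine Finset.sum_congr rfl fun i _ => ?_
      rw [hF]
      simp
    · intro o _ ho
      rw [hF]
      simp only [ho, if_false, mul_one]
      rw [Finset.sum_coe_sort]
      exact hw1 a1 o
    · intro h
      exact absurd (Finset.mem_univ o0) h

lemma pwlc_exists_strategy (t : Finset (S → ℝ)) (ht : t.Nonempty)
    (x : (A1 × (O → {α // α ∈ t})) → ℝ)
    (hx : x ∈ stdSimplex ℝ (A1 × (O → {α // α ∈ t}))) :
    ∃ π1 ∈ stdSimplex ℝ A1, ∃ αb : A1 → O → S → ℝ,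
      (∀ a1 o, αb a1 o ∈ convexHull ℝ (↑t : Set (S → ℝ))) ∧
      (∀ a1, ∑ φ : O → {α // α ∈ t}, x (a1, φ) = π1 a1) ∧
      (∀ a1 o s', ∑ φ : O → {α // α ∈ t}, x (a1, φ) * (↑(φ o) : S → ℝ) s'
        = π1 a1 * αb a1 o s') := by
  classical
  set π1 : A1 → ℝ := fun a1 => ∑ φ : O → {α // α ∈ t}, x (a1, φ) with hπ1def
  have hπ1nonneg : ∀ a1, 0 ≤ π1 a1 := fun a1 => Finset.sum_nonneg fun φ _ => hx.1 _
  have hπ1mem : π1 ∈ stdSimplex ℝ A1 := by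
    refine ⟨hπ1nonneg, ?_⟩
    rw [← Fintype.sum_prod_type]
    exact hx.2
  have hzero : ∀ a1, π1 a1 = 0 → ∀ φ : O → {α // α ∈ t}, x (a1, φ) = 0 := by
    intro a1 h φ
    exact (Finset.sum_eq_zero_iff_of_nonneg (fun ψ _ => hx.1 (a1, ψ))).1 h φ
      (Finset.mem_univ φ)
  set αb : A1 → O → S → ℝ := fun a1 o =>
    if _ : π1 a1 = 0 then (ht.choose : S → ℝ)
    else Finset.univ.centerMass (fun φ : O → {α // α ∈ t} => x (a1, φ))
      (fun φ => (↑(φ o) : S → ℝ)) with hαbdef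
  refine ⟨π1, hπ1mem, αb, ?_, fun a1 => rfl, ?_⟩
  · intro a1 o
    by_cases h : π1 a1 = 0
    · rw [hαbdef]
      simp only [h, dif_pos]
      exact subset_convexHull ℝ _ ht.choose_spec
    · rw [hαbdef]
      simp only [dif_neg h]
      exact Finset.centerMass_mem_convexHull _ (fun φ _ => hx.1 _)
        (lt_of_le_of_ne (hπ1nonneg a1) (Ne.symm h)) (fun φ _ => (φ o).2)
  · intro a1 o s'
    by_cases h : π1 a1 = 0
    · rw [h, zero_mul]
      exact Finset.sum_eq_zero fun φ _ => by rw [hzero a1 h φ, zero_mul]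
    · rw [hαbdef]
      simp only [dif_neg h]
      have hcm : (Finset.univ.centerMass (fun φ : O → {α // α ∈ t} => x (a1, φ))
          (fun φ => (↑(φ o) : S → ℝ))) s'
          = (π1 a1)⁻¹ * ∑ φ : O → {α // α ∈ t}, x (a1, φ) * (↑(φ o) : S → ℝ) s' := by
        rw [Finset.centerMass]
        simp only [Pi.smul_apply, Finset.sum_apply, smul_eq_mul]
        rfl
      rw [hcm, ← mul_assoc, mul_inv_cancel₀ h, one_mul]


def pwlcSum (n : Type*) [Fintype n] : (n → ℝ) →ₗ[ℝ] ℝ where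
  toFun x := ∑ e, x e
  map_add' x y := by simp only [Pi.add_apply, Finset.sum_add_distrib]
  map_smul' r x := by simp only [Pi.smul_apply, smul_eq_mul, RingHom.id_apply, Finset.mul_sum]

def pwlcCons (G : OSPOSG S A1 A2 O) {ι : Type*} [Fintype ι] (g : ι → S → ℝ) (τ : S → A2) :
    ((A1 × (O → ι)) ⊕ (Bool ⊕ S × A2)) → (((A1 × (O → ι)) → ℝ) →ₗ[ℝ] ℝ)
  | Sum.inl e => -LinearMap.proj e
  | Sum.inr (Sum.inl true) => pwlcSum _
  | Sum.inr (Sum.inl false) => -pwlcSum _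
  | Sum.inr (Sum.inr p) => pwlcL G g p.1 (τ p.1) - pwlcL G g p.1 p.2

def pwlcRhs {n p : Type*} : (n ⊕ (Bool ⊕ p)) → ℝ
  | Sum.inl _ => 0
  | Sum.inr (Sum.inl true) => 1
  | Sum.inr (Sum.inl false) => -1
  | Sum.inr (Sum.inr _) => 0

lemma pwlc_mem_cell_iff (G : OSPOSG S A1 A2 O) {ι : Type*} [Fintype ι] (g : ι → S → ℝ)
    (τ : S → A2) (x : (A1 × (O → ι)) → ℝ) :
    (∀ i, pwlcCons G g τ i x ≤ pwlcRhs i) ↔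
      (x ∈ stdSimplex ℝ (A1 × (O → ι)) ∧
        ∀ s a2, pwlcL G g s (τ s) x ≤ pwlcL G g s a2 x) := by
  constructor
  · intro h
    refine ⟨⟨fun e => ?_, ?_⟩, fun s a2 => ?_⟩
    · have := h (Sum.inl e)
      simpa [pwlcCons, pwlcRhs] using this
    · have h1 := h (Sum.inr (Sum.inl true))
      have h2 := h (Sum.inr (Sum.inl false))
      simp only [pwlcCons, pwlcRhs, pwlcSum, LinearMap.coe_mk, AddHom.coe_mk,
        LinearMap.neg_apply] at h1 h2
      linarith
    · have := h (Sum.inr (Sum.inr (s, a2)))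
      simpa [pwlcCons, pwlcRhs, sub_nonpos] using this
  · rintro ⟨⟨hpos, hsum⟩, hcell⟩ i
    rcases i with e | b | p
    · simpa [pwlcCons, pwlcRhs] using hpos e
    · rcases b with _ | _ <;>
        simp only [pwlcCons, pwlcRhs, pwlcSum, LinearMap.coe_mk, AddHom.coe_mk,
          LinearMap.neg_apply, hsum] <;> norm_num
    · simpa [pwlcCons, pwlcRhs, sub_nonpos] using hcell p.1 p.2

lemma pwlc_compact (G : OSPOSG S A1 A2 O) {ι : Type*} [Fintype ι] (g : ι → S → ℝ)
    (τ : S → A2) :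
    IsCompact {x : (A1 × (O → ι)) → ℝ | ∀ i, pwlcCons G g τ i x ≤ pwlcRhs i} := by
  have hsub : {x : (A1 × (O → ι)) → ℝ | ∀ i, pwlcCons G g τ i x ≤ pwlcRhs i}
      ⊆ stdSimplex ℝ (A1 × (O → ι)) :=
    fun x hx => ((pwlc_mem_cell_iff G g τ x).1 hx).1
  have hclosed : IsClosed {x : (A1 × (O → ι)) → ℝ | ∀ i, pwlcCons G g τ i x ≤ pwlcRhs i} := by
    have hrw : {x : (A1 × (O → ι)) → ℝ | ∀ i, pwlcCons G g τ i x ≤ pwlcRhs i}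
        = ⋂ i, {x : (A1 × (O → ι)) → ℝ | pwlcCons G g τ i x ≤ pwlcRhs i} := by
      ext x
      simp [Set.mem_iInter]
    rw [hrw]
    exact isClosed_iInter fun i =>
      isClosed_le (pwlcCons G g τ i).continuous_of_finiteDimensional continuous_const
  exact IsCompact.of_isClosed_subset (isCompact_stdSimplex ℝ _) hclosed hsub


end PWLCAuxSection

/-- If `V` is piecewise linear and convex (a pointwise maximum of a finite nonempty set `Γ₀`
of linear functions), then so is `HV`: there is a finite nonempty set `Γ'` of linear
functions whose pointwise maximum is `HV` at each belief. -/
theorem maxComposition_pwlc (G : OSPOSG S A1 A2 O) (Γ₀ : Set (S → ℝ))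
    (hfin : Γ₀.Finite) (hne : Γ₀.Nonempty) :
    ∃ Γ' : Set (S → ℝ), Γ'.Finite ∧ Γ'.Nonempty ∧
      ∀ b ∈ stdSimplex ℝ S,
        IsGreatest ((fun α => lineval α b) '' Γ')
          (sSup {y : ℝ | ∃ π1 ∈ stdSimplex ℝ A1, ∃ αb : A1 → O → S → ℝ,
            (∀ a1 o, αb a1 o ∈ convexHull ℝ Γ₀) ∧ y = G.valcomp π1 αb b}) := by
  classical
  set t : Finset (S → ℝ) := hfin.toFinset with htdef
  have htΓ : (↑t : Set (S → ℝ)) = Γ₀ := hfin.coe_toFinset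
  have htne : t.Nonempty := by
    rw [htdef, Set.Finite.toFinset_nonempty]
    exact hne
  haveI hne' : Nonempty {α // α ∈ t} := ⟨⟨htne.choose, htne.choose_spec⟩⟩
  set gv : {α // α ∈ t} → S → ℝ := Subtype.val with hgv
  choose W hWfin hWsub hWmax using fun τ : S → A2 =>
    PolyAux.poly_argmax (pwlcCons G gv τ) pwlcRhs (pwlc_compact G gv τ)
  have hcell : ∀ x ∈ stdSimplex ℝ (A1 × (O → {α // α ∈ t})), ∃ τ : S → A2,
      (∀ i, pwlcCons G gv τ i x ≤ pwlcRhs i) ∧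
      ∀ s, pwlcL G gv s (τ s) x
        = Finset.univ.inf' Finset.univ_nonempty (fun a2 => pwlcL G gv s a2 x) := by
    intro x hx
    have h := fun s : S =>
      Finset.exists_mem_eq_inf' (Finset.univ_nonempty) (fun a2 : A2 => pwlcL G gv s a2 x)
    choose τ hτmem hτeq using h
    refine ⟨τ, (pwlc_mem_cell_iff G gv τ x).2 ⟨hx, fun s a2 => ?_⟩, fun s => (hτeq s).symm⟩
    rw [← hτeq s]
    exact Finset.inf'_le _ (Finset.mem_univ a2)
  refine ⟨⋃ τ : S → A2, (fun v => fun s : S => pwlcL G gv s (τ s) v) '' W τ,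
    Set.finite_iUnion fun τ => (hWfin τ).image _, ?_, ?_⟩
  · obtain ⟨τ₀, hτ₀K, _⟩ := hcell _
      (ite_eq_mem_stdSimplex ℝ (Classical.arbitrary (A1 × (O → {α // α ∈ t}))))
    obtain ⟨v, hv, _⟩ := hWmax τ₀ 0 _ hτ₀K
    exact ⟨_, Set.mem_iUnion.2 ⟨τ₀, Set.mem_image_of_mem _ hv⟩⟩
  · intro b hb
    have hFbval : ∀ (x : (A1 × (O → {α // α ∈ t})) → ℝ) (π1 : A1 → ℝ)
        (αb : A1 → O → S → ℝ),
        (∀ a1, ∑ φ : O → {α // α ∈ t}, x (a1, φ) = π1 a1) →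
        (∀ a1 o s', ∑ φ : O → {α // α ∈ t}, x (a1, φ) * gv (φ o) s'
          = π1 a1 * αb a1 o s') →
        (∑ s, b s * Finset.univ.inf' Finset.univ_nonempty (fun a2 => pwlcL G gv s a2 x))
          = G.valcomp π1 αb b := by
      intro x π1 αb h0 h1
      rw [OSPOSG.valcomp]
      refine Finset.sum_congr rfl fun s _ => ?_
      congr 1
      rw [OSPOSG.valcompVert]
      exact Finset.inf'_congr Finset.univ_nonempty rfl fun a2 _ =>
        (pwlc_moment_eq G gv π1 αb x h0 h1 s a2).symm
    have hset : {y : ℝ | ∃ π1 ∈ stdSimplex ℝ A1, ∃ αb : A1 → O → S → ℝ,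
        (∀ a1 o, αb a1 o ∈ convexHull ℝ Γ₀) ∧ y = G.valcomp π1 αb b}
        = (fun x => ∑ s, b s * Finset.univ.inf' Finset.univ_nonempty
            (fun a2 => pwlcL G gv s a2 x)) '' stdSimplex ℝ (A1 × (O → {α // α ∈ t})) := by
      ext y
      constructor
      · rintro ⟨π1, hπ1, αb, hαb, rfl⟩
        obtain ⟨x, hx, h0, h1⟩ := pwlc_exists_rep t π1 hπ1 αb (by rw [htΓ]; exact hαb)
        exact ⟨x, hx, hFbval x π1 αb h0 h1⟩
      · rintro ⟨x, hx, rfl⟩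
        obtain ⟨π1, hπ1, αb, hconv, h0, h1⟩ := pwlc_exists_strategy t htne x hx
        exact ⟨π1, hπ1, αb, fun a1 o => htΓ ▸ hconv a1 o, hFbval x π1 αb h0 h1⟩

    rw [hset]
    set B : Set ℝ := (fun x => ∑ s, b s * Finset.univ.inf' Finset.univ_nonempty
        (fun a2 => pwlcL G gv s a2 x)) '' stdSimplex ℝ (A1 × (O → {α // α ∈ t})) with hBdef
    set I : Set ℝ := (fun α => lineval α b) ''
      (⋃ τ : S → A2, (fun v => fun s : S => pwlcL G gv s (τ s) v) '' W τ) with hIdef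
    have hIfin : I.Finite :=
      (Set.finite_iUnion fun τ => (hWfin τ).image _).image _
    have hsub1 : I ⊆ B := by
      rintro y ⟨α, hα, rfl⟩
      rw [Set.mem_iUnion] at hα
      obtain ⟨τ, hmem⟩ := hα
      obtain ⟨v, hv, rfl⟩ := hmem
      have hvprops := (pwlc_mem_cell_iff G gv τ v).1 (hWsub τ hv)
      refine ⟨v, hvprops.1, ?_⟩
      show (∑ s, b s * Finset.univ.inf' Finset.univ_nonempty (fun a2 => pwlcL G gv s a2 v))
        = lineval (fun s => pwlcL G gv s (τ s) v) b
      rw [lineval]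
      refine Finset.sum_congr rfl fun s _ => ?_
      show b s * _ = b s * pwlcL G gv s (τ s) v
      congr 1
      exact le_antisymm (Finset.inf'_le _ (Finset.mem_univ (τ s)))
        (Finset.le_inf' _ _ fun a2 _ => hvprops.2 s a2)
    have hsub2 : ∀ y ∈ B, ∃ z ∈ I, y ≤ z := by
      rintro y ⟨x, hx, rfl⟩
      obtain ⟨τ, hxK, hxeq⟩ := hcell x hx
      obtain ⟨v, hv, hle⟩ := hWmax τ (∑ s, b s • pwlcL G gv s (τ s)) x hxK
      refine ⟨lineval (fun s => pwlcL G gv s (τ s) v) b,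
        ⟨_, Set.mem_iUnion.2 ⟨τ, Set.mem_image_of_mem _ hv⟩, rfl⟩, ?_⟩
      have happ : ∀ z : (A1 × (O → {α // α ∈ t})) → ℝ,
          (∑ s, b s • pwlcL G gv s (τ s)) z = ∑ s, b s * pwlcL G gv s (τ s) z := by
        intro z
        simp [LinearMap.sum_apply, LinearMap.smul_apply, smul_eq_mul]
      show (∑ s, b s * Finset.univ.inf' Finset.univ_nonempty (fun a2 => pwlcL G gv s a2 x))
        ≤ lineval (fun s => pwlcL G gv s (τ s) v) b
      rw [lineval]
      calc ∑ s, b s * Finset.univ.inf' Finset.univ_nonempty (fun a2 => pwlcL G gv s a2 x)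
          = (∑ s, b s • pwlcL G gv s (τ s)) x := by
            rw [happ]
            exact Finset.sum_congr rfl fun s _ => by rw [← hxeq s]
        _ ≤ (∑ s, b s • pwlcL G gv s (τ s)) v := hle
        _ = ∑ s, b s * (fun s => pwlcL G gv s (τ s) v) s := by rw [happ]
    have hIne : I.Nonempty := by
      obtain ⟨z, hz, _⟩ := hsub2 _
        ⟨_, ite_eq_mem_stdSimplex ℝ (Classical.arbitrary (A1 × (O → {α // α ∈ t}))), rfl⟩
      exact ⟨z, hz⟩
    have hgI : IsGreatest I (sSup I) :=
      ⟨hIne.csSup_mem hIfin, fun y hy => le_csSup hIfin.bddAbove hy⟩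
    have hgB : IsGreatest B (sSup I) := by
      refine ⟨hsub1 hgI.1, fun y hy => ?_⟩
      obtain ⟨z, hz, hyz⟩ := hsub2 y hy
      exact hyz.trans (hgI.2 hz)
    rw [hgB.csSup_eq]
    exact hgI


end OSPOSG
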